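/- Let T = cS with c ∈ Σ∖{$}, where S is a p-string of length n ≥ 1 ending with $, with $ occurring nowhere else in S. Let k_S = RA_S⁻¹[n] and k_T = RA_T⁻¹[n+1]. Then k_T = |T|_{Σ_{<c}} + |{ i : L°_T[i] = c, 1 ≤ i ≤ k_S }|, where Σ_{<c} = { a ∈ Σ : a < c } and |T|_{Σ_{<c}} is the number of occurrences in T of characters from Σ_{<c}. -/

import Mathlib

/-! Common framework: parameterized strings over static alphabet `σ` and
parameter alphabet `π`.  A p-string is a `List (σ ⊕ π)`. -/

variable {σ π : Type*}

instance instInhabSum [Inhabited σ] : Inhabited (σ ⊕ π) := ⟨Sum.inl default⟩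

/-- one right rotation: the last character moves to the front -/
def rotR1 {α : Type*} (W : List α) : List α := W.rotate (W.length - 1)

/-- `rotR W i` is the `i`-th right rotation `Rot(W, i)` -/
def rotR {α : Type*} (W : List α) : ℕ → List α
  | 0 => W
  | i + 1 => rotR1 (rotR W i)

/-- 1-based access `W[i]` (junk default outside the range) -/
def get1 {α : Type*} [Inhabited α] (W : List α) (i : ℕ) : α := W.getD (i - 1) default

/-- the prev-encoding `⟨T⟩`, a list over `σ ⊕ ℕ∞` -/
def prevEnc [DecidableEq σ] [DecidableEq π] (T : List (σ ⊕ π)) : List (σ ⊕ ℕ∞) :=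
  (List.range T.length).map fun k =>
    match T[k]? with
    | none => Sum.inr ⊤
    | some (Sum.inl a) => Sum.inl a
    | some (Sum.inr b) =>
      match ((List.range k).filter fun j => T[j]? = some (Sum.inr b)).max? with
      | none => Sum.inr ⊤
      | some j => Sum.inr ((k - j : ℕ) : ℕ∞)

/-- number of distinct parameter characters occurring in `W` -/
def distinctParams [DecidableEq π] (W : List (σ ⊕ π)) : ℕ :=
  (W.filterMap Sum.getRight?).dedup.length

/-- the encoding `⟦T⟧`, a list over `σ ⊕ ℕ`:  a static character is kept; a
parameter character at (1-based) position `i` is replaced by the number of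
distinct parameter characters in `Rot(T, n-i)[1:ℓ]` where `ℓ` is the leftmost
occurrence position of `T[i]` in `Rot(T, n-i)`. -/
def encodeE [DecidableEq σ] [DecidableEq π] (T : List (σ ⊕ π)) : List (σ ⊕ ℕ) :=
  (List.range T.length).map fun k =>
    match T[k]? with
    | none => Sum.inr 0
    | some (Sum.inl a) => Sum.inl a
    | some (Sum.inr b) =>
      let R := rotR T (T.length - (k + 1))
      Sum.inr (distinctParams (R.take (R.idxOf (Sum.inr b) + 1)))

/-- order on prev-encoding characters: every static character is smaller than
every element of `ℕ∞` (and `ℕ∞` carries its usual order with `∞` on top) -/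
def pvlt [LT σ] : (σ ⊕ ℕ∞) → (σ ⊕ ℕ∞) → Prop
  | Sum.inl a, Sum.inl b => a < b
  | Sum.inl _, Sum.inr _ => True
  | Sum.inr _, Sum.inl _ => False
  | Sum.inr x, Sum.inr y => x < y

/-- `T` is a p-string of length ≥ 1 ending with the static character `d`,
which occurs nowhere else in `T`. -/
def EndsWith [DecidableEq σ] [DecidableEq π] (T : List (σ ⊕ π)) (d : σ) : Prop :=
  1 ≤ T.length ∧ T.getLast? = some (Sum.inl d) ∧ T.count (Sum.inl d) = 1

/-- `RA` represents the parameterized rotation array `RA_T` (0-based indices: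
`RA_T[i] = (RA ⟨i-1⟩).val + 1`): the prev-encodings of the rotations are listed
in strictly increasing lexicographic order. -/
def IsRA [LinearOrder σ] [DecidableEq π] (T : List (σ ⊕ π))
    (RA : Fin T.length ≃ Fin T.length) : Prop :=
  ∀ i j : Fin T.length, i < j →
    List.Lex pvlt (prevEnc (rotR T ((RA i).val + 1))) (prevEnc (rotR T ((RA j).val + 1)))

/-- `LF` represents the LF mapping: `LF_T(i) = j` iff `T_{RA_T[i]+1} = T_{RA_T[j]}`. -/
def IsLF [LinearOrder σ] [DecidableEq π] (T : List (σ ⊕ π))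
    (RA LF : Fin T.length ≃ Fin T.length) : Prop :=
  ∀ i : Fin T.length, rotR T ((RA i).val + 2) = rotR T ((RA (LF i)).val + 1)

/-- the pBWT array `L_T[i] = ⟦T_{RA_T[i]}⟧[n]` -/
def Larr [LinearOrder σ] [DecidableEq π] [Inhabited σ] (T : List (σ ⊕ π))
    (RA : Fin T.length ≃ Fin T.length) (i : Fin T.length) : σ ⊕ ℕ :=
  get1 (encodeE (rotR T ((RA i).val + 1))) T.length

/-- the array `F_T[i] = ⟦T_{RA_T[i]}⟧[1]` -/
def Farr [LinearOrder σ] [DecidableEq π] [Inhabited σ] (T : List (σ ⊕ π))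
    (RA : Fin T.length ≃ Fin T.length) (i : Fin T.length) : σ ⊕ ℕ :=
  get1 (encodeE (rotR T ((RA i).val + 1))) 1

/-- longest common prefix of two lists -/
def lcp {α : Type*} [DecidableEq α] : List α → List α → List α
  | a :: as, b :: bs => if a = b then a :: lcp as bs else []
  | _, _ => []

/-- `lcp∞(X, Y)`: the number of `∞`'s in the longest common prefix of `X` and `Y` -/
def lcpInf [DecidableEq σ] (X Y : List (σ ⊕ ℕ∞)) : ℕ :=
  (lcp X Y).count (Sum.inr ⊤)

/-- the `∞`-LCP array (1-based): `LCP∞_T[i] = lcp∞(⟨T_{RA_T[i]}⟩, ⟨T_{RA_T[i+1]}⟩)`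
for `1 ≤ i < n`, and `0` otherwise. -/
def LCPa [LinearOrder σ] [DecidableEq π] (T : List (σ ⊕ π))
    (RA : Fin T.length ≃ Fin T.length) (i : ℕ) : ℕ :=
  if h : 1 ≤ i ∧ i < T.length then
    lcpInf (prevEnc (rotR T ((RA ⟨i - 1, by omega⟩).val + 1)))
           (prevEnc (rotR T ((RA ⟨i, h.2⟩).val + 1)))
  else 0

/-- parameterized match: a bijection on `σ ⊕ π` fixing all static characters
renames `S` into `T` -/
def PMatch (S T : List (σ ⊕ π)) : Prop :=
  ∃ f : (σ ⊕ π) ≃ (σ ⊕ π), (∀ a : σ, f (Sum.inl a) = Sum.inl a) ∧ S.map f = T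

/-- leftmost (1-based) occurrence position of `c` in `W`, `0` if absent -/
def leftPos [DecidableEq σ] [DecidableEq π] (W : List (σ ⊕ π)) (c : σ ⊕ π) : ℕ :=
  if W.contains c then W.idxOf c + 1 else 0

/-- rightmost (1-based) occurrence position of `c` in `W`, `0` if absent -/
def rightPos [DecidableEq σ] [DecidableEq π] (W : List (σ ⊕ π)) (c : σ ⊕ π) : ℕ :=
  if W.contains c then W.length - W.reverse.idxOf c else 0

/-! ### Auxiliary lemmas -/

section Aux

open List

lemma rotR_eq_rotate {α : Type*} (W : List α) : ∀ k, rotR W k = W.rotate (k * (W.length - 1))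
  | 0 => by simp [rotR]
  | (k+1) => by
      rw [rotR, rotR_eq_rotate W k, rotR1, List.length_rotate, List.rotate_rotate]
      congr 1
      ring

lemma rotR_of_le {α : Type*} (W : List α) {r : ℕ} (h1 : 1 ≤ r) (h2 : r ≤ W.length) :
    rotR W r = W.rotate (W.length - r) := by
  obtain ⟨r', rfl⟩ : ∃ r', r = r' + 1 := ⟨r - 1, by omega⟩
  obtain ⟨L', hL⟩ : ∃ L', W.length = L' + 1 := ⟨W.length - 1, by omega⟩
  rw [rotR_eq_rotate]
  have h : (r' + 1) * (W.length - 1) = W.length * r' + (W.length - (r' + 1)) := by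
    rw [hL]
    simp only [Nat.add_sub_cancel]
    have e1 : (r' + 1) * L' = r' * L' + L' := Nat.succ_mul _ _
    have e2 : (L' + 1) * r' = r' * L' + r' := by rw [Nat.succ_mul, Nat.mul_comm]
    omega
  rw [h, ← List.rotate_rotate, List.rotate_length_mul]

lemma rotR_self {α : Type*} (W : List α) : rotR W W.length = W := by
  rw [rotR_eq_rotate, List.rotate_length_mul]

lemma length_rotR {α : Type*} (W : List α) (k : ℕ) : (rotR W k).length = W.length := by
  rw [rotR_eq_rotate, List.length_rotate]

lemma rotR_get?_zero {α : Type*} (W : List α) {r : ℕ} (h1 : 1 ≤ r) (h2 : r ≤ W.length) :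
    (rotR W r)[0]? = W[W.length - r]? := by
  rw [rotR_of_le W h1 h2, 
    List.getElem?_rotate (by omega), Nat.zero_add, Nat.mod_eq_of_lt (by omega)]

lemma rotR_get?_last {α : Type*} (W : List α) {r : ℕ} (h1 : 1 ≤ r) (h2 : r + 1 ≤ W.length) :
    (rotR W r)[W.length - 1]? = W[W.length - 1 - r]? := by
  rw [rotR_of_le W h1 (by omega), 
    List.getElem?_rotate (by omega)]
  congr 1
  have h : (W.length - 1) + (W.length - r) = W.length + (W.length - 1 - r) := by omega
  rw [h, Nat.add_mod_left, Nat.mod_eq_of_lt (by omega)]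

variable {σ π : Type*}

/-- the entry of `prevEnc` at (0-based) position `k` -/
def pe [DecidableEq σ] [DecidableEq π] (X : List (σ ⊕ π)) (k : ℕ) : σ ⊕ ℕ∞ :=
  match X[k]? with
  | none => Sum.inr ⊤
  | some (Sum.inl a) => Sum.inl a
  | some (Sum.inr b) =>
    match ((List.range k).filter fun j => X[j]? = some (Sum.inr b)).max? with
    | none => Sum.inr ⊤
    | some j => Sum.inr ((k - j : ℕ) : ℕ∞)

lemma length_prevEnc [DecidableEq σ] [DecidableEq π] (X : List (σ ⊕ π)) :
    (prevEnc X).length = X.length := by simp [prevEnc]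

lemma prevEnc_get? [DecidableEq σ] [DecidableEq π] (X : List (σ ⊕ π)) {k : ℕ}
    (hk : k < X.length) : (prevEnc X)[k]? = some (pe X k) := by
  unfold prevEnc
  rw [List.getElem?_map, List.getElem?_range hk]
  rfl

lemma pe_static [DecidableEq σ] [DecidableEq π] {X : List (σ ⊕ π)} {k : ℕ} {a : σ}
    (h : X[k]? = some (Sum.inl a)) : pe X k = Sum.inl a := by
  unfold pe
  rw [h]

lemma pe_param [DecidableEq σ] [DecidableEq π] {X : List (σ ⊕ π)} {k : ℕ} {b : π}
    (h : X[k]? = some (Sum.inr b)) : ∃ v : ℕ∞, pe X k = Sum.inr v := by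
  unfold pe
  rw [h]
  dsimp only
  cases hm : ((List.range k).filter fun j => X[j]? = some (Sum.inr b)).max? with
  | none => exact ⟨⊤, rfl⟩
  | some j => exact ⟨((k - j : ℕ) : ℕ∞), rfl⟩

lemma pe_congr [DecidableEq σ] [DecidableEq π] {X Y : List (σ ⊕ π)} {k : ℕ}
    (h : ∀ j, j ≤ k → X[j]? = Y[j]?) : pe X k = pe Y k := by
  unfold pe
  rw [h k le_rfl]
  cases hch : Y[k]? with
  | none => rfl
  | some ch =>
    cases ch with
    | inl a => rfl
    | inr b =>
      dsimp only
      have hf : ((List.range k).filter fun j => X[j]? = some (Sum.inr b)) =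
          ((List.range k).filter fun j => Y[j]? = some (Sum.inr b)) := by
        apply List.filter_congr
        intro j hj
        rw [h j (le_of_lt (List.mem_range.mp hj))]
      rw [hf]

lemma max?_map_succ : ∀ (l : List ℕ), (l.map Nat.succ).max? = l.max?.map Nat.succ
  | [] => rfl
  | (a :: l) => by
      rw [List.map_cons, List.max?_cons, List.max?_cons, max?_map_succ l]
      cases hm : l.max? with
      | none => simp
      | some m => simp [Nat.succ_max_succ]

lemma filter_range_succ_shift (p : ℕ → Bool) (k : ℕ) (h0 : p 0 = false) :
    (List.range (k+1)).filter p = ((List.range k).filter (fun j => p (j+1))).map Nat.succ := by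
  rw [List.range_succ_eq_map, List.filter_cons]
  simp only [h0, if_false, Bool.false_eq_true, List.filter_map]
  rfl

lemma pe_cons [DecidableEq σ] [DecidableEq π] (c : σ) (W : List (σ ⊕ π)) (k : ℕ) :
    pe (Sum.inl c :: W) (k+1) = pe W k := by
  unfold pe
  rw [List.getElem?_cons_succ]
  cases hch : W[k]? with
  | none => rfl
  | some ch =>
    cases ch with
    | inl a => rfl
    | inr b =>
      dsimp only
      have h0 : (decide ((Sum.inl c :: W)[0]? = some (Sum.inr b : σ ⊕ π))) = false := by
        simp
      have hsh := filter_range_succ_shift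
        (fun j => decide ((Sum.inl c :: W)[j]? = some (Sum.inr b : σ ⊕ π))) k h0
      have hps : (fun j => decide ((Sum.inl c :: W)[j+1]? = some (Sum.inr b : σ ⊕ π))) =
          (fun j => decide (W[j]? = some (Sum.inr b : σ ⊕ π))) := by
        funext j
        rw [List.getElem?_cons_succ]
      rw [hsh, hps, max?_map_succ]
      cases hm : ((List.range k).filter fun j => W[j]? = some (Sum.inr b : σ ⊕ π)).max? with
      | none => rfl
      | some j =>
        have h' : k + 1 - Nat.succ j = k - j := by omega
        simp [h']

lemma prevEnc_cons_inl [DecidableEq σ] [DecidableEq π] (c : σ) (W : List (σ ⊕ π)) :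
    prevEnc (Sum.inl c :: W) = Sum.inl c :: prevEnc W := by
  apply List.ext_getElem?
  intro k
  cases k with
  | zero =>
    rw [prevEnc_get? _ (by simp), List.getElem?_cons_zero]
    exact congrArg some (pe_static rfl)
  | succ k =>
    rw [List.getElem?_cons_succ]
    by_cases hk : k < W.length
    · rw [prevEnc_get? _ (by simpa using Nat.succ_lt_succ hk), prevEnc_get? _ hk, pe_cons]
    · rw [List.getElem?_eq_none_iff.mpr, List.getElem?_eq_none_iff.mpr]
      · rw [length_prevEnc]; omega
      · rw [length_prevEnc]; simpa using Nat.succ_le_succ (by omega)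

lemma prevEnc_take [DecidableEq σ] [DecidableEq π] {X Y : List (σ ⊕ π)}
    (hlen : X.length = Y.length) {t : ℕ} (h : X.take t = Y.take t) :
    (prevEnc X).take t = (prevEnc Y).take t := by
  have hget : ∀ j, j < t → X[j]? = Y[j]? := by
    intro j hj
    rw [← List.getElem?_take_of_lt hj (l := X), h, List.getElem?_take_of_lt hj]
  apply List.ext_getElem?
  intro k
  by_cases hk : k < t
  · rw [List.getElem?_take_of_lt hk, List.getElem?_take_of_lt hk]
    by_cases hkX : k < X.length
    · rw [prevEnc_get? _ hkX, prevEnc_get? _ (hlen ▸ hkX)]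
      exact congrArg some (pe_congr (fun j hj => hget j (lt_of_le_of_lt hj hk)))
    · rw [List.getElem?_eq_none_iff.mpr (by rw [length_prevEnc]; omega),
        List.getElem?_eq_none_iff.mpr (by rw [length_prevEnc]; omega)]
  · rw [List.getElem?_eq_none_iff.mpr, List.getElem?_eq_none_iff.mpr]
    · exact le_trans (le_trans List.length_take.le (min_le_left _ _)) (by omega)
    · exact le_trans (le_trans List.length_take.le (min_le_left _ _)) (by omega)

/-! Lex order helpers -/

lemma lex_cons_iff' {α : Type*} {r : α → α → Prop} {a b : α} {l₁ l₂ : List α} :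
    List.Lex r (a :: l₁) (b :: l₂) ↔ r a b ∨ (a = b ∧ List.Lex r l₁ l₂) := by
  constructor
  · intro h
    cases h with
    | rel h => exact Or.inl h
    | cons h => exact Or.inr ⟨rfl, h⟩
  · rintro (h | ⟨rfl, h⟩)
    · exact List.Lex.rel h
    · exact List.Lex.cons h

lemma lex_iff_take {α : Type*} {r : α → α → Prop} :
    ∀ (t : ℕ) (X Z : List α), X.take t ≠ Z.take t →
      (List.Lex r X Z ↔ List.Lex r (X.take t) (Z.take t))
  | 0, X, Z, h => absurd rfl h
  | (t+1), [], [], h => absurd rfl h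
  | (t+1), [], (z::zs), _ => by
      simp only [List.take_nil, List.take_succ_cons]
      exact iff_of_true List.Lex.nil List.Lex.nil
  | (t+1), (x::xs), [], _ => by
      simp only [List.take_nil, List.take_succ_cons]
      exact iff_of_false (List.not_lex_nil) (List.not_lex_nil)
  | (t+1), (x::xs), (z::zs), h => by
      rw [List.take_succ_cons, List.take_succ_cons]
      by_cases hxz : x = z
      · subst hxz
        have h' : xs.take t ≠ zs.take t := by
          intro hh
          exact h (by rw [List.take_succ_cons, List.take_succ_cons, hh])
        rw [lex_cons_iff', lex_cons_iff', lex_iff_take t xs zs h']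
      · rw [lex_cons_iff', lex_cons_iff']
        simp [hxz]

lemma lex_head {α : Type*} {r : α → α → Prop} {X Z : List α} {x z : α}
    (hx : X[0]? = some x) (hz : Z[0]? = some z) (hxz : x ≠ z) :
    List.Lex r X Z ↔ r x z := by
  cases X with
  | nil => simp at hx
  | cons a l =>
    cases Z with
    | nil => simp at hz
    | cons b m =>
      obtain rfl : a = x := by simpa using hx
      obtain rfl : b = z := by simpa using hz
      rw [lex_cons_iff']
      simp [hxz]

instance pvlt_isAsymm [LinearOrder σ] : IsAsymm (σ ⊕ ℕ∞) (pvlt (σ := σ)) := by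
  constructor
  rintro (a | x) (b | y) h1 h2 <;> simp only [pvlt] at h1 h2 <;> exact lt_asymm h1 h2

lemma lex_asymm [LinearOrder σ] {X Y : List (σ ⊕ ℕ∞)}
    (h : List.Lex pvlt X Y) : ¬ List.Lex pvlt Y X :=
  (List.Lex.asymm (pvlt (σ := σ))).asymm X Y h

lemma lex_irrefl [LinearOrder σ] (X : List (σ ⊕ ℕ∞)) : ¬ List.Lex pvlt X X :=
  fun h => lex_asymm h h

/-! counting helpers -/

lemma card_filter_get {α : Type*} (l : List α) (p : α → Bool) :
    (Finset.univ.filter fun i : Fin l.length => p (l.get i) = true).card = l.countP p := by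
  induction l with
  | nil => simp
  | cons a t ih =>
    have key : (Finset.univ.filter fun i : Fin (t.length + 1) =>
        p ((a :: t).get i) = true).card = (a :: t).countP p := by
      rw [Finset.card_filter, Fin.sum_univ_succ]
      have hsum : (∑ i : Fin t.length, if p ((a :: t).get i.succ) = true then 1 else 0)
          = t.countP p := by
        rw [← ih, Finset.card_filter]
        exact Finset.sum_congr rfl (fun i _ => by simp)
      rw [hsum, List.countP_cons]
      have hget0 : (a :: t).get (0 : Fin (t.length + 1)) = a := rfl
      rw [hget0]
      cases hp : p a <;> simp [hp] <;> omega
    exact key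

end Aux

section Aux2

open List

variable {σ π : Type*}

instance sumLawfulBEq {σ π : Type*} [BEq σ] [BEq π] [LawfulBEq σ] [LawfulBEq π] :
    LawfulBEq (σ ⊕ π) where
  eq_of_beq {a b} h := by
    cases a <;> cases b
    · exact congrArg Sum.inl (eq_of_beq h)
    · exact (Bool.false_ne_true h).elim
    · exact (Bool.false_ne_true h).elim
    · exact congrArg Sum.inr (eq_of_beq h)
  rfl {a} := by
    cases a with
    | inl x => show (x == x) = true; exact BEq.rfl
    | inr x => show (x == x) = true; exact BEq.rfl

lemma endsWith_get?_last [DecidableEq σ] [DecidableEq π] {S : List (σ ⊕ π)} {d : σ}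
    (hS : EndsWith S d) : S[S.length - 1]? = some (Sum.inl d) := by
  rw [← List.getLast?_eq_getElem?]
  exact hS.2.1

lemma endsWith_unique [DecidableEq σ] [DecidableEq π] {S : List (σ ⊕ π)} {d : σ}
    (hS : EndsWith S d) {j : ℕ} (hj : j < S.length - 1) :
    S[j]? ≠ some (Sum.inl d) := by
  intro h
  have hlast := endsWith_get?_last hS
  have hmem1 : Sum.inl d ∈ S.take (j+1) := by
    apply List.mem_of_getElem? (i := j)
    rw [List.getElem?_take_of_lt (by omega)]
    exact h
  have hmem2 : Sum.inl d ∈ S.drop (j+1) := by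
    apply List.mem_of_getElem? (i := S.length - 1 - (j+1))
    rw [List.getElem?_drop, show j + 1 + (S.length - 1 - (j+1)) = S.length - 1 by omega]
    exact hlast
  have h1 : 0 < (S.take (j+1)).count (Sum.inl d) :=
    (List.count_pos_iff (a := Sum.inl d) (l := S.take (j+1))).mpr hmem1
  have h2 : 0 < (S.drop (j+1)).count (Sum.inl d) :=
    (List.count_pos_iff (a := Sum.inl d) (l := S.drop (j+1))).mpr hmem2
  have h3 := hS.2.2
  rw [← List.take_append_drop (j+1) S, List.count_append] at h3
  omega

lemma ra_lt_iff [LinearOrder σ] {m : ℕ} (key : Fin m → List (σ ⊕ ℕ∞)) (e : Fin m ≃ Fin m)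
    (hmono : ∀ i j : Fin m, i < j → List.Lex pvlt (key (e i)) (key (e j))) (i j : Fin m) :
    i < j ↔ List.Lex pvlt (key (e i)) (key (e j)) := by
  constructor
  · exact hmono i j
  · intro h
    rcases lt_trichotomy i j with h' | h' | h'
    · exact h'
    · subst h'
      exact absurd h (lex_irrefl _)
    · exact absurd h (lex_asymm (hmono j i h'))

lemma ra_card [LinearOrder σ] {m : ℕ} (key : Fin m → List (σ ⊕ ℕ∞)) (e : Fin m ≃ Fin m)
    (hmono : ∀ i j : Fin m, i < j → List.Lex pvlt (key (e i)) (key (e j))) (t : Fin m)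
    [DecidablePred fun q : Fin m => List.Lex pvlt (key q) (key (e t))] :
    (Finset.univ.filter fun q : Fin m => List.Lex pvlt (key q) (key (e t))).card = t.val := by
  classical
  have h1 : ∀ q : Fin m, List.Lex pvlt (key q) (key (e t)) ↔ e.symm q < t := by
    intro q
    rw [← Equiv.apply_symm_apply e q]
    rw [Equiv.symm_apply_apply]
    exact (ra_lt_iff key e hmono (e.symm q) t).symm
  rw [Finset.filter_congr (fun q _ => h1 q)]
  have h2 : (Finset.univ.filter fun q : Fin m => e.symm q < t).card
      = (Finset.univ.filter fun j : Fin m => j < t).card := by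
    apply Finset.card_bij' (fun q _ => e.symm q) (fun p _ => e p)
    · intro q hq
      simp only [Finset.mem_filter, Finset.mem_univ, true_and] at hq ⊢
      exact hq
    · intro p hp
      simp only [Finset.mem_filter, Finset.mem_univ, true_and, Equiv.symm_apply_apply] at hp ⊢
      exact hp
    · intro q _
      simp
    · intro p _
      simp
  rw [h2]
  have h3 : (Finset.univ.filter fun j : Fin m => j < t) = Finset.Iio t := by
    ext j
    simp
  rw [h3, Fin.card_Iio]

lemma length_encodeE [DecidableEq σ] [DecidableEq π] (X : List (σ ⊕ π)) :
    (encodeE X).length = X.length := by simp [encodeE]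

lemma encodeE_get?_inl_iff [DecidableEq σ] [DecidableEq π] (X : List (σ ⊕ π)) {k : ℕ}
    (hk : k < X.length) (c : σ) :
    (encodeE X)[k]? = some (Sum.inl c) ↔ X[k]? = some (Sum.inl c) := by
  unfold encodeE
  rw [List.getElem?_map, List.getElem?_range hk, Option.map_some]
  dsimp only
  cases hch : X[k]? with
  | none =>
    have hch2 : X[k]? = none := by exact hch
    simp [hch, hch2]
  | some ch =>
    have hch2 : X[k]? = some ch := by exact hch
    cases ch with
    | inl a => simp [hch, hch2]
    | inr b => simp [hch, hch2]

lemma get1_encodeE_last [DecidableEq σ] [DecidableEq π] [Inhabited σ] (X : List (σ ⊕ π))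
    (hX : 1 ≤ X.length) (c : σ) :
    get1 (encodeE X) X.length = Sum.inl c ↔ X[X.length - 1]? = some (Sum.inl c) := by
  unfold get1
  rw [List.getD_eq_getElem?_getD]
  have hlen : X.length - 1 < (encodeE X).length := by rw [length_encodeE]; omega
  obtain ⟨v, hv⟩ : ∃ v, (encodeE X)[X.length - 1]? = some v :=
    ⟨(encodeE X).get ⟨X.length - 1, hlen⟩, List.getElem?_eq_getElem hlen⟩
  rw [hv, Option.getD_some]
  constructor
  · intro h
    rw [h] at hv
    exact (encodeE_get?_inl_iff X (by omega) c).mp hv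
  · intro h
    have h2 := (encodeE_get?_inl_iff X (by omega) c).mpr h
    rw [hv] at h2
    exact Option.some_injective _ h2

lemma key_equiv [LinearOrder σ] [DecidableEq π] {d cs : σ} {S : List (σ ⊕ π)}
    (hS : EndsWith S d) {r : ℕ} (hr2 : 2 ≤ r) (hrn : r ≤ S.length)
    (hhead : S[S.length - r]? = some (Sum.inl cs)) :
    (List.Lex pvlt (prevEnc (rotR (Sum.inl cs :: S) r)) (prevEnc (Sum.inl cs :: S)) ↔
     List.Lex pvlt (prevEnc (rotR S (r-1))) (prevEnc S)) := by
  have hn : 2 ≤ S.length := le_trans hr2 hrn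
  set m := S.length - r with hm
  have hmlt : m < S.length := by omega
  obtain ⟨hmlt', hget⟩ := List.getElem?_eq_some_iff.mp hhead
  have hdropS : S.drop m = Sum.inl cs :: S.drop (m+1) := by
    rw [List.drop_eq_getElem_cons hmlt, show S[m] = Sum.inl cs from hget]
  have hT : rotR (Sum.inl cs :: S) r
      = Sum.inl cs :: (S.drop (m+1) ++ Sum.inl cs :: S.take m) := by
    rw [rotR_of_le _ (by omega) (by simp only [List.length_cons]; omega),
        List.rotate_eq_drop_append_take (by simp only [List.length_cons]; omega),
        show (Sum.inl cs :: S : List (σ ⊕ π)).length - r = m + 1 by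
          simp only [List.length_cons]; omega,
        List.drop_succ_cons, List.take_succ_cons, hdropS]
    rfl
  have hV : rotR S (r-1) = S.drop (m+1) ++ S.take (m+1) := by
    rw [rotR_of_le _ (by omega) (by omega), List.rotate_eq_drop_append_take (by omega),
      show S.length - (r-1) = m + 1 by omega]
  set W := S.drop (m+1) ++ Sum.inl cs :: S.take m with hWd
  set V := S.drop (m+1) ++ S.take (m+1) with hVd
  have hdl : (S.drop (m+1)).length = r - 1 := by
    rw [List.length_drop]
    omega
  have hWlen : W.length = S.length := by
    rw [hWd, List.length_append, List.length_cons, List.length_take,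
      Nat.min_eq_left (by omega)]
    omega
  have hVlen : V.length = S.length := by
    rw [hVd, List.length_append, List.length_take, List.length_drop,
      Nat.min_eq_left (by omega)]
    omega
  have htakeWV : W.take (r-1) = V.take (r-1) := by
    rw [hWd, hVd, List.take_left' hdl, List.take_left' hdl]
  have hWgd : W[r-2]? = some (Sum.inl d) := by
    rw [hWd, List.getElem?_append_left (by rw [hdl]; omega), List.getElem?_drop,
      show m + 1 + (r-2) = S.length - 1 by omega]
    exact endsWith_get?_last hS
  have hpWS : (prevEnc W).take (r-1) ≠ (prevEnc S).take (r-1) := by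
    intro hEq
    have h1 : ((prevEnc W).take (r-1))[r-2]? = ((prevEnc S).take (r-1))[r-2]? := by
      rw [hEq]
    rw [List.getElem?_take_of_lt (by omega), List.getElem?_take_of_lt (by omega),
      prevEnc_get? _ (by rw [hWlen]; omega), prevEnc_get? _ (by omega),
      pe_static hWgd] at h1
    cases hch : S[r-2]? with
    | none =>
      rw [List.getElem?_eq_none_iff] at hch
      omega
    | some ch =>
      cases ch with
      | inl a =>
        rw [pe_static hch] at h1
        have had : d = a := by
          have := Option.some_injective _ h1
          exact Sum.inl.inj this
        exact endsWith_unique hS (by omega) (had ▸ hch)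
      | inr b =>
        obtain ⟨v, hv⟩ := pe_param hch
        rw [hv] at h1
        simp at h1
  have hpVS : (prevEnc V).take (r-1) ≠ (prevEnc S).take (r-1) := by
    rw [← prevEnc_take (hWlen.trans hVlen.symm) htakeWV]
    exact hpWS
  rw [hT, hV, prevEnc_cons_inl,
    show prevEnc (Sum.inl cs :: S) = Sum.inl cs :: prevEnc S from prevEnc_cons_inl cs S,
    lex_cons_iff',
    lex_iff_take (r-1) (prevEnc W) (prevEnc S) hpWS,
    lex_iff_take (r-1) (prevEnc V) (prevEnc S) hpVS,
    prevEnc_take (hWlen.trans hVlen.symm) htakeWV]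
  have hpv : ¬ pvlt (Sum.inl cs : σ ⊕ ℕ∞) (Sum.inl cs) := by simp [pvlt]
  simp [hpv]

end Aux2



/-- Let `T = cS` with `c ∈ Σ ∖ {$}`, `k_S = RA_S⁻¹[n]` and
`k_T = RA_T⁻¹[n+1]` (1-based; here `kS.val + 1 = k_S`, `kT.val + 1 = k_T`).
Then `k_T = |T|_{Σ_{<c}} + |{ i : L°_T[i] = c, 1 ≤ i ≤ k_S }|`. -/
theorem position_static [LinearOrder σ] [DecidableEq π] [Inhabited σ]
    (d : σ) (hd : ∀ a : σ, d ≤ a)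
    (S : List (σ ⊕ π)) (hS : EndsWith S d)
    (cs : σ) (hcs : cs ≠ d)
    (RAS : Fin S.length ≃ Fin S.length) (hRAS : IsRA S RAS)
    (RAT : Fin (Sum.inl cs :: S).length ≃ Fin (Sum.inl cs :: S).length)
    (hRAT : IsRA (Sum.inl cs :: S) RAT)
    (kS : Fin S.length) (hkS : (RAS kS).val + 1 = S.length)
    (kT : Fin (Sum.inl cs :: S).length) (hkT : (RAT kT).val + 1 = S.length + 1) :
    kT.val + 1
      = ((Sum.inl cs :: S).countP fun ch =>
          match ch with
          | Sum.inl a => decide (a < cs)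
          | Sum.inr _ => false)
        + (Finset.univ.filter fun i : Fin S.length =>
            i ≤ kS ∧
            get1 (encodeE (rotR (Sum.inl cs :: S) ((RAS i).val + 1))) (S.length + 1)
              = Sum.inl cs).card := by
  classical
  have hn : 1 ≤ S.length := hS.1
  set pB : (σ ⊕ π) → Bool := fun ch =>
    match ch with
    | Sum.inl a => decide (a < cs)
    | Sum.inr _ => false with hpB
  -- index bound
  have hidx : ∀ q : Fin (Sum.inl cs :: S).length,
      S.length - q.val < (Sum.inl cs :: S).length := by
    intro q
    simp only [List.length_cons]
    omega
  -- Step 1 : kT.val counts rotations of T lex-smaller than T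
  have hkey : prevEnc (rotR (Sum.inl cs :: S) ((RAT kT).val + 1))
      = prevEnc (Sum.inl cs :: S) := by
    rw [hkT, show S.length + 1 = (Sum.inl cs :: S : List (σ ⊕ π)).length from rfl, rotR_self]
  have e1 := ra_card (fun q : Fin (Sum.inl cs :: S).length =>
      prevEnc (rotR (Sum.inl cs :: S) (q.val + 1))) RAT (fun i j hij => hRAT i j hij) kT
  simp only [hkey] at e1
  -- e1 : (filter fun q => Lex pvlt (prevEnc (rotR T (q+1))) (prevEnc T)).card = kT.val
  -- Step 2 : split according to the head character of the rotation
  have hK0 : (prevEnc (Sum.inl cs :: S))[0]? = some (Sum.inl (cs : σ)) := by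
    rw [prevEnc_cons_inl]
    rfl
  have hsplit : ∀ q : Fin (Sum.inl cs :: S).length,
      (List.Lex pvlt (prevEnc (rotR (Sum.inl cs :: S) (q.val + 1)))
          (prevEnc (Sum.inl cs :: S))) ↔
      (pB ((Sum.inl cs :: S).get ⟨S.length - q.val, hidx q⟩) = true
        ∨ ((Sum.inl cs :: S)[S.length - q.val]? = some (Sum.inl cs)
            ∧ List.Lex pvlt (prevEnc (rotR (Sum.inl cs :: S) (q.val + 1)))
                (prevEnc (Sum.inl cs :: S)))) := by
    intro q
    have hq1 : 1 ≤ q.val + 1 := by omega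
    have hq2 : q.val + 1 ≤ (Sum.inl cs :: S).length := by
      have := q.isLt
      omega
    have hhead : (rotR (Sum.inl cs :: S) (q.val + 1))[0]?
        = (Sum.inl cs :: S)[S.length - q.val]? := by
      rw [rotR_get?_zero _ hq1 hq2]
      congr 1
      simp only [List.length_cons]
      omega
    have hgetq : (Sum.inl cs :: S)[S.length - q.val]?
        = some ((Sum.inl cs :: S).get ⟨S.length - q.val, hidx q⟩) :=
      List.getElem?_eq_getElem _
    have hrotlen : 0 < (rotR (Sum.inl cs :: S) (q.val + 1)).length := by
      rw [length_rotR]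
      simp
    have hpk0 : (prevEnc (rotR (Sum.inl cs :: S) (q.val + 1)))[0]?
        = some (pe (rotR (Sum.inl cs :: S) (q.val + 1)) 0) := prevEnc_get? _ hrotlen
    cases hch : (Sum.inl cs :: S).get ⟨S.length - q.val, hidx q⟩ with
    | inl a =>
      have hst : (rotR (Sum.inl cs :: S) (q.val + 1))[0]? = some (Sum.inl a) := by
        rw [hhead, hgetq, hch]
      have hpes : pe (rotR (Sum.inl cs :: S) (q.val + 1)) 0 = Sum.inl a := pe_static hst
      by_cases hac : a = cs
      · subst hac
        constructor
        · intro h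
          exact Or.inr ⟨by rw [hgetq, hch], h⟩
        · rintro (hB | ⟨-, h⟩)
          · rw [hpB] at hB
            simp at hB
          · exact h
      · have hlex : List.Lex pvlt (prevEnc (rotR (Sum.inl cs :: S) (q.val + 1)))
            (prevEnc (Sum.inl cs :: S)) ↔ pvlt (Sum.inl a : σ ⊕ ℕ∞) (Sum.inl cs) :=
          lex_head (by rw [hpk0, hpes]) hK0 (by simp [hac])
        rw [hlex]
        constructor
        · intro h
          left
          rw [hpB]
          simpa [pvlt] using h
        · rintro (hB | ⟨hc, -⟩)
          · rw [hpB] at hB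
            simpa [pvlt] using hB
          · rw [hgetq, hch] at hc
            exact absurd (Sum.inl.inj (Option.some_injective _ hc)) hac
    | inr b =>
      have hst : (rotR (Sum.inl cs :: S) (q.val + 1))[0]? = some (Sum.inr b) := by
        rw [hhead, hgetq, hch]
      obtain ⟨v, hv⟩ := pe_param hst
      have hlex : List.Lex pvlt (prevEnc (rotR (Sum.inl cs :: S) (q.val + 1)))
          (prevEnc (Sum.inl cs :: S)) ↔ pvlt (Sum.inr v : σ ⊕ ℕ∞) (Sum.inl cs) :=
        lex_head (by rw [hpk0, hv]) hK0 (by simp)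
      rw [hlex]
      apply iff_of_false
      · simp [pvlt]
      · rintro (hB | ⟨hc, -⟩)
        · rw [hpB] at hB
          simp at hB
        · rw [hgetq, hch] at hc
          simp at hc
  have hdisj : Disjoint
      (Finset.univ.filter fun q : Fin (Sum.inl cs :: S).length =>
        pB ((Sum.inl cs :: S).get ⟨S.length - q.val, hidx q⟩) = true)
      (Finset.univ.filter fun q : Fin (Sum.inl cs :: S).length =>
        (Sum.inl cs :: S)[S.length - q.val]? = some (Sum.inl cs)
          ∧ List.Lex pvlt (prevEnc (rotR (Sum.inl cs :: S) (q.val + 1)))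
              (prevEnc (Sum.inl cs :: S))) := by
    rw [Finset.disjoint_left]
    intro q hqA hqB
    rw [Finset.mem_filter] at hqA hqB
    have h1 := hqA.2
    have h2 := hqB.2.1
    rw [List.getElem?_eq_getElem (hidx q)] at h2
    have h3 := Option.some_injective _ h2
    rw [show (Sum.inl cs :: S).get ⟨S.length - q.val, hidx q⟩ = Sum.inl cs from h3, hpB] at h1
    simp at h1
  have e2 : (Finset.univ.filter fun q : Fin (Sum.inl cs :: S).length =>
        List.Lex pvlt (prevEnc (rotR (Sum.inl cs :: S) (q.val + 1)))
          (prevEnc (Sum.inl cs :: S))).card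
      = (Finset.univ.filter fun q : Fin (Sum.inl cs :: S).length =>
          pB ((Sum.inl cs :: S).get ⟨S.length - q.val, hidx q⟩) = true).card
        + (Finset.univ.filter fun q : Fin (Sum.inl cs :: S).length =>
            (Sum.inl cs :: S)[S.length - q.val]? = some (Sum.inl cs)
              ∧ List.Lex pvlt (prevEnc (rotR (Sum.inl cs :: S) (q.val + 1)))
                  (prevEnc (Sum.inl cs :: S))).card := by
    rw [Finset.filter_congr (fun q _ => hsplit q), Finset.filter_or,
      Finset.card_union_of_disjoint hdisj]
  -- Step 3 : the first class counts the small static characters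
  have e3 : (Finset.univ.filter fun q : Fin (Sum.inl cs :: S).length =>
        pB ((Sum.inl cs :: S).get ⟨S.length - q.val, hidx q⟩) = true).card
      = (Sum.inl cs :: S).countP pB := by
    rw [← card_filter_get (Sum.inl cs :: S) pB]
    have hinv : ∀ q : Fin (Sum.inl cs :: S).length, S.length - (S.length - q.val) = q.val := by
      intro q
      have := q.isLt
      simp only [List.length_cons] at this
      omega
    refine Finset.card_equiv
      (⟨fun q => ⟨S.length - q.val, hidx q⟩, fun q => ⟨S.length - q.val, hidx q⟩,
        fun q => Fin.ext (hinv q), fun q => Fin.ext (hinv q)⟩ :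
          Fin (Sum.inl cs :: S).length ≃ Fin (Sum.inl cs :: S).length) ?_
    intro q
    simp only [Finset.mem_filter, Finset.mem_univ, true_and, Equiv.coe_fn_mk]
  -- Step 4 : rewrite the `L°`-condition as a condition on characters of `T`
  have hC : ∀ i : Fin S.length,
      (get1 (encodeE (rotR (Sum.inl cs :: S) ((RAS i).val + 1))) (S.length + 1) = Sum.inl cs) ↔
      (Sum.inl cs :: S)[S.length - (RAS i).val - 1]? = some (Sum.inl cs) := by
    intro i
    have h1 : 1 ≤ (RAS i).val + 1 := by omega
    have hXlen : (rotR (Sum.inl cs :: S) ((RAS i).val + 1)).length = S.length + 1 := by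
      rw [length_rotR]
      rfl
    rw [show S.length + 1 = (rotR (Sum.inl cs :: S) ((RAS i).val + 1)).length from hXlen.symm,
      get1_encodeE_last _ (by rw [hXlen]; omega) cs, hXlen]
    have hlast := rotR_get?_last (Sum.inl cs :: S) (r := (RAS i).val + 1) h1
      (by have := (RAS i).isLt; simp only [List.length_cons]; omega)
    simp only [List.length_cons, Nat.add_sub_cancel] at hlast
    simp only [Nat.add_sub_cancel]
    rw [hlast, show S.length - ((RAS i).val + 1) = S.length - (RAS i).val - 1 by omega]
  have hCkS : get1 (encodeE (rotR (Sum.inl cs :: S) ((RAS kS).val + 1))) (S.length + 1)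
      = Sum.inl cs := by
    rw [hC kS, show S.length - (RAS kS).val - 1 = 0 by omega]
    rfl
  -- Step 5 : split the right-hand side set at `i = kS`
  have hsplit2 : ∀ i : Fin S.length,
      (i ≤ kS ∧ get1 (encodeE (rotR (Sum.inl cs :: S) ((RAS i).val + 1))) (S.length + 1)
          = Sum.inl cs) ↔
      (i = kS ∨ (i < kS ∧ get1 (encodeE (rotR (Sum.inl cs :: S) ((RAS i).val + 1)))
          (S.length + 1) = Sum.inl cs)) := by
    intro i
    constructor
    · rintro ⟨hle, hc⟩
      rcases lt_or_eq_of_le hle with h | h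
      · exact Or.inr ⟨h, hc⟩
      · exact Or.inl h
    · rintro (rfl | ⟨hlt, hc⟩)
      · exact ⟨le_rfl, hCkS⟩
      · exact ⟨le_of_lt hlt, hc⟩
  have hdisj2 : Disjoint (Finset.univ.filter fun i : Fin S.length => i = kS)
      (Finset.univ.filter fun i : Fin S.length =>
        i < kS ∧ get1 (encodeE (rotR (Sum.inl cs :: S) ((RAS i).val + 1))) (S.length + 1)
          = Sum.inl cs) := by
    rw [Finset.disjoint_left]
    intro i h1 h2
    rw [Finset.mem_filter] at h1 h2
    rw [h1.2] at h2
    exact absurd h2.2.1 (lt_irrefl _)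
  have e4 : (Finset.univ.filter fun i : Fin S.length =>
      i ≤ kS ∧ get1 (encodeE (rotR (Sum.inl cs :: S) ((RAS i).val + 1))) (S.length + 1)
        = Sum.inl cs).card
      = 1 + (Finset.univ.filter fun i : Fin S.length =>
          i < kS ∧ get1 (encodeE (rotR (Sum.inl cs :: S) ((RAS i).val + 1))) (S.length + 1)
            = Sum.inl cs).card := by
    rw [Finset.filter_congr (fun i _ => hsplit2 i), Finset.filter_or,
      Finset.card_union_of_disjoint hdisj2, Finset.filter_eq']
    simp
  -- Step 6 : identify `i < kS` with a lex condition on rotations of `S`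
  have hkSkey : prevEnc (rotR S ((RAS kS).val + 1)) = prevEnc S := by
    rw [hkS, rotR_self]
  have hlt_iff : ∀ i : Fin S.length, i < kS ↔
      List.Lex pvlt (prevEnc (rotR S ((RAS i).val + 1))) (prevEnc S) := by
    intro i
    have h := ra_lt_iff (fun q : Fin S.length => prevEnc (rotR S (q.val + 1))) RAS
      (fun a b hab => hRAS a b hab) i kS
    simpa [hkSkey] using h
  have e5 : (Finset.univ.filter fun i : Fin S.length =>
      i < kS ∧ get1 (encodeE (rotR (Sum.inl cs :: S) ((RAS i).val + 1))) (S.length + 1)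
        = Sum.inl cs).card
      = (Finset.univ.filter fun p : Fin S.length =>
          List.Lex pvlt (prevEnc (rotR S (p.val + 1))) (prevEnc S)
            ∧ (Sum.inl cs :: S)[S.length - p.val - 1]? = some (Sum.inl cs)).card := by
    refine Finset.card_equiv RAS ?_
    intro i
    simp only [Finset.mem_filter, Finset.mem_univ, true_and]
    rw [hlt_iff i, hC i]
  -- Step 7 : the bijection `p ↦ p + 1` between the two remaining sets
  have e6 : (Finset.univ.filter fun p : Fin S.length =>
      List.Lex pvlt (prevEnc (rotR S (p.val + 1))) (prevEnc S)
        ∧ (Sum.inl cs :: S)[S.length - p.val - 1]? = some (Sum.inl cs)).card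
      = (Finset.univ.filter fun q : Fin (Sum.inl cs :: S).length =>
          (Sum.inl cs :: S)[S.length - q.val]? = some (Sum.inl cs)
            ∧ List.Lex pvlt (prevEnc (rotR (Sum.inl cs :: S) (q.val + 1)))
                (prevEnc (Sum.inl cs :: S))).card := by
    refine Finset.card_bij'
      (fun p _ => (⟨p.val + 1, by
        have := p.isLt
        simp only [List.length_cons]
        omega⟩ : Fin (Sum.inl cs :: S).length))
      (fun q _ => (⟨q.val - 1, by
        have := q.isLt
        simp only [List.length_cons] at this
        omega⟩ : Fin S.length)) ?_ ?_ ?_ ?_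
    · intro p hp
      rw [Finset.mem_filter] at hp ⊢
      obtain ⟨-, hp1, hp2⟩ := hp
      refine ⟨Finset.mem_univ _, ?_, ?_⟩
      · show (Sum.inl cs :: S)[S.length - (p.val + 1)]? = some (Sum.inl cs)
        rw [show S.length - (p.val + 1) = S.length - p.val - 1 by omega]
        exact hp2
      · show List.Lex pvlt (prevEnc (rotR (Sum.inl cs :: S) (p.val + 1 + 1)))
          (prevEnc (Sum.inl cs :: S))
        have hple : p.val + 2 ≤ S.length := by
          by_contra hgt
          have hpn : p.val = S.length - 1 := by have := p.isLt; omega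
          rw [hpn, show S.length - 1 + 1 = S.length by omega, rotR_self] at hp1
          exact lex_irrefl _ hp1
        have hhead2 : S[S.length - (p.val + 2)]? = some (Sum.inl cs) := by
          have h := hp2
          rw [show S.length - p.val - 1 = (S.length - (p.val + 2)) + 1 by omega,
            List.getElem?_cons_succ] at h
          exact h
        exact (key_equiv (d := d) hS (r := p.val + 2) (by omega) (by omega) hhead2).mpr hp1
    · intro q hq
      rw [Finset.mem_filter] at hq ⊢
      obtain ⟨-, hq1, hq2⟩ := hq
      have hq0 : 1 ≤ q.val := by
        by_contra hq0
        have h0 : q.val = 0 := by omega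
        rw [h0, Nat.sub_zero, show S.length = (S.length - 1) + 1 by omega,
          List.getElem?_cons_succ, endsWith_get?_last hS] at hq1
        exact hcs (Sum.inl.inj (Option.some_injective _ hq1)).symm
      have hqle : q.val ≤ S.length - 1 := by
        by_contra hgt
        have h0 : q.val = S.length := by
          have := q.isLt
          simp only [List.length_cons] at this
          omega
        rw [h0, show S.length + 1 = (Sum.inl cs :: S : List (σ ⊕ π)).length from rfl,
          rotR_self] at hq2
        exact lex_irrefl _ hq2
      have hhead2 : S[S.length - (q.val + 1)]? = some (Sum.inl cs) := by
        have h := hq1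
        rw [show S.length - q.val = (S.length - (q.val + 1)) + 1 by omega,
          List.getElem?_cons_succ] at h
        exact h
      have hlex := (key_equiv (d := d) hS (r := q.val + 1) (by omega) (by omega) hhead2).mp hq2
      refine ⟨Finset.mem_univ _, ?_, ?_⟩
      · show List.Lex pvlt (prevEnc (rotR S (q.val - 1 + 1))) (prevEnc S)
        rw [show q.val - 1 + 1 = q.val by omega]
        exact hlex
      · show (Sum.inl cs :: S)[S.length - (q.val - 1) - 1]? = some (Sum.inl cs)
        rw [show S.length - (q.val - 1) - 1 = S.length - q.val by omega]
        exact hq1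
    · intro p _
      apply Fin.ext
      show p.val + 1 - 1 = p.val
      omega
    · intro q hq
      rw [Finset.mem_filter] at hq
      obtain ⟨-, hq1, -⟩ := hq
      have hq0 : 1 ≤ q.val := by
        by_contra hq0
        have h0 : q.val = 0 := by omega
        rw [h0, Nat.sub_zero, show S.length = (S.length - 1) + 1 by omega,
          List.getElem?_cons_succ, endsWith_get?_last hS] at hq1
        exact hcs (Sum.inl.inj (Option.some_injective _ hq1)).symm
      apply Fin.ext
      show q.val - 1 + 1 = q.val
      omega
  omega
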